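/- Let H be a finite simple graph and let k ≤ |V_H|. Then the maximum of unreach(B) over all k-element arc sets B of the transformer digraph G_H is at least k plus the Densest Subgraph value of H for parameter k; that is, OPT_EB(G_H, k) ≥ OPT_DS(H, k) + k. -/

import Mathlib

open SimpleGraph

/-- `eCount H S` is the number of edges of `H` with both endpoints in `S`. -/
noncomputable def eCount {V : Type*} (H : SimpleGraph V) (S : Finset V) : ℕ :=
  {e : H.edgeSet | ∀ v ∈ (e : Sym2 V), v ∈ S}.ncard

/-- Vertices of the transformer digraph `G_H`: `none` is the node `z`, `some (Sum.inl v)` is the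
node `x_v` for a vertex `v` of `H`, and `some (Sum.inr e)` is the node `y_e` for an edge `e`
of `H`. -/
abbrev TVert {V : Type*} (H : SimpleGraph V) : Type _ := Option (V ⊕ ↥H.edgeSet)

/-- Arcs of the transformer digraph: `z → x_v` for every vertex `v`, and `x_v → y_e` whenever
`v` is an endpoint of the edge `e`. -/
def arc {V : Type*} (H : SimpleGraph V) : TVert H → TVert H → Prop
  | none, some (Sum.inl _) => True
  | some (Sum.inl v), some (Sum.inr e) => v ∈ (e : Sym2 V)
  | _, _ => False

/-- `unreach H B` is the number of vertices of the transformer digraph that are not reachable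
from `z` by a directed path using only arcs outside the blocked set `B`. -/
noncomputable def unreach {V : Type*} (H : SimpleGraph V)
    (B : Set (TVert H × TVert H)) : ℕ :=
  {w : TVert H | ¬ Relation.ReflTransGen (fun a b => arc H a b ∧ (a, b) ∉ B) none w}.ncard

/-- The Densest Subgraph value: the maximum of `eCount H S` over all `k`-element vertex sets. -/
noncomputable def optDS {V : Type*} [Fintype V] (H : SimpleGraph V) (k : ℕ) : ℕ :=
  (Finset.univ.powersetCard k).sup (fun S => eCount H S)

/-- The Edge Blocking optimum: the maximum of `unreach H B` over all `k`-element sets `B` of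
arcs of the transformer digraph. -/
noncomputable def optEB {V : Type*} (H : SimpleGraph V) (k : ℕ) : ℕ :=
  sSup {m | ∃ B : Finset (TVert H × TVert H),
    (∀ p ∈ B, arc H p.1 p.2) ∧ B.card = k ∧ unreach H ↑B = m}

open Classical in
lemma reach_char {V : Type*} (H : SimpleGraph V) (S : Finset V)
    (B : Finset (TVert H × TVert H))
    (hB : B = S.image (fun v => ((none : TVert H), some (Sum.inl v))))
    (w : TVert H)
    (h : Relation.ReflTransGen (fun a b => arc H a b ∧ (a, b) ∉ (↑B : Set _)) none w) :
    w = none ∨ (∃ v, v ∉ S ∧ w = some (Sum.inl v)) ∨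
      (∃ e : H.edgeSet, (∃ v ∈ (e : Sym2 V), v ∉ S) ∧ w = some (Sum.inr e)) := by
  induction h with
  | refl => exact Or.inl rfl
  | @tail b c hab hbc ih =>
    rcases ih with rfl | ⟨v, hv, rfl⟩ | ⟨e, he, rfl⟩
    · rcases c with _ | (v | e)
      · exact hbc.1.elim
      · refine Or.inr (Or.inl ⟨v, fun hv => hbc.2 ?_, rfl⟩)
        simp [hB, Finset.mem_image]
        exact hv
      · exact hbc.1.elim
    · rcases c with _ | (u | e)
      · exact hbc.1.elim
      · exact hbc.1.elim
      · exact Or.inr (Or.inr ⟨e, ⟨v, hbc.1, hv⟩, rfl⟩)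
    · rcases c with _ | (u | e')
      · exact hbc.1.elim
      · exact hbc.1.elim
      · exact hbc.1.elim

/-- For `k ≤ |V_H|`, the maximum of `unreach(B)` over all `k`-element arc sets
`B` of the transformer digraph is at least `OPT_DS(H, k) + k`. -/
theorem stmt8 {V : Type*} [Fintype V] (H : SimpleGraph V) (k : ℕ)
    (hk : k ≤ Fintype.card V) :
    optDS H k + k ≤ optEB H k := by
  classical
  have hne : (Finset.univ.powersetCard k (α := V)).Nonempty := by
    rw [Finset.powersetCard_nonempty]
    simpa using hk
  obtain ⟨S, hSmem, hSval⟩ :=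
    Finset.exists_mem_eq_sup (Finset.univ.powersetCard k) hne (fun S => eCount H S)
  have hScard : S.card = k := (Finset.mem_powersetCard.1 hSmem).2
  set B : Finset (TVert H × TVert H) :=
    S.image (fun v => ((none : TVert H), some (Sum.inl v))) with hBdef
  have hBarc : ∀ p ∈ B, arc H p.1 p.2 := by
    intro p hp
    simp only [hBdef, Finset.mem_image] at hp
    obtain ⟨v, _, rfl⟩ := hp
    trivial
  have hBcard : B.card = k := by
    rw [hBdef, Finset.card_image_of_injective _ (fun a b h => by simpa using h), hScard]
  set U : Set (TVert H) :=
    {w : TVert H | ¬ Relation.ReflTransGen (fun a b => arc H a b ∧ (a, b) ∉ (↑B : Set _)) none w}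
    with hUdef
  set T1 : Set (TVert H) := (fun v => (some (Sum.inl v) : TVert H)) '' ↑S with hT1
  set T2 : Set (TVert H) :=
    (fun e : H.edgeSet => (some (Sum.inr e) : TVert H)) ''
      {e : H.edgeSet | ∀ v ∈ (e : Sym2 V), v ∈ S} with hT2
  have hsub : T1 ∪ T2 ⊆ U := by
    rintro w (⟨v, hv, rfl⟩ | ⟨e, he, rfl⟩) h
    · rcases reach_char H S B hBdef _ h with h1 | ⟨u, hu, h2⟩ | ⟨e, _, h2⟩
      · simp at h1
      · simp only [Option.some.injEq, Sum.inl.injEq] at h2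
        exact hu (h2 ▸ hv)
      · simp at h2
    · rcases reach_char H S B hBdef _ h with h1 | ⟨u, hu, h2⟩ | ⟨e', ⟨u, hue, hu⟩, h2⟩
      · simp at h1
      · simp at h2
      · simp only [Option.some.injEq, Sum.inr.injEq] at h2
        exact hu (he u (h2 ▸ hue))
  have hdisj : Disjoint T1 T2 := by
    rw [Set.disjoint_left]
    rintro w ⟨v, hv, rfl⟩ ⟨e, he, h⟩
    simp at h
  have hcard : (T1 ∪ T2).ncard = k + eCount H S := by
    rw [Set.ncard_union_eq hdisj (Set.toFinite _) (Set.toFinite _), hT1, hT2,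
      Set.ncard_image_of_injective _ (fun a b h => by simpa using h),
      Set.ncard_image_of_injective _ (fun a b h => by simpa using h),
      Set.ncard_coe_finset, hScard]
    rfl
  have hle : optDS H k + k ≤ unreach H ↑B := by
    have h1 := Set.ncard_le_ncard hsub (Set.toFinite U)
    rw [hcard] at h1
    have h2 : optDS H k = eCount H S := hSval
    have h3 : unreach H ↑B = U.ncard := rfl
    omega
  have hmem : unreach H ↑B ∈ {m | ∃ B : Finset (TVert H × TVert H),
      (∀ p ∈ B, arc H p.1 p.2) ∧ B.card = k ∧ unreach H ↑B = m} :=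
    ⟨B, hBarc, hBcard, rfl⟩
  have hbdd : BddAbove {m | ∃ B : Finset (TVert H × TVert H),
      (∀ p ∈ B, arc H p.1 p.2) ∧ B.card = k ∧ unreach H ↑B = m} := by
    refine ⟨Nat.card (TVert H), ?_⟩
    rintro m ⟨B', -, -, rfl⟩
    calc unreach H ↑B' ≤ (Set.univ : Set (TVert H)).ncard :=
          Set.ncard_le_ncard (Set.subset_univ _) Set.finite_univ
      _ = Nat.card (TVert H) := Set.ncard_univ _
  exact le_trans hle (le_csSup hbdd hmem)
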